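/- Let H = (V,E) be a finite hypergraph with 2-VC-dimension d ≥ 2 and let S ∈ E be a hyperedge with |S| ≥ d+1. Assume that for every (d+1)-element subset X of S, the empty set is 2-realized by H with respect to X. Then there exist an integer i ∈ {2,…,d} and an i-element subset A ⊆ S such that A 2-stabs at least C(|S|,d+1)/((d−1)·C(|S|,i)) subsets B ⊆ S∖A of cardinality d+1−i. -/

import Mathlib

/-- `T'` is `t`-realized by the hyperedge family `E` with respect to `T`:
`T' ∪ W ∈ Π_H(T)` for some `W ⊆ T` with `|W| < t`. -/
def TRealized {V : Type*} [DecidableEq V] (E : Finset (Finset V)) (t : ℕ)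
    (T T' : Finset V) : Prop :=
  ∃ W ⊆ T, W.card < t ∧ ∃ e ∈ E, T ∩ e = T' ∪ W

/-- `T` is `t`-shattered by the hyperedge family `E`. -/
def TShattered {V : Type*} [DecidableEq V] (E : Finset (Finset V)) (t : ℕ)
    (T : Finset V) : Prop :=
  ∀ T' ⊆ T, TRealized E t T T'

/-- The hypergraph with hyperedge family `E` has `t`-VC-dimension exactly `d`. -/
def IsTVCDim {V : Type*} [DecidableEq V] (E : Finset (Finset V)) (t d : ℕ) : Prop :=
  (∃ T : Finset V, TShattered E t T ∧ T.card = d) ∧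
  ∀ T : Finset V, TShattered E t T → T.card ≤ d

/-- `A` `t`-stabs `B`: every hyperedge containing `B` contains at least `t` vertices of `A`. -/
def TStabs {V : Type*} [DecidableEq V] (E : Finset (Finset V)) (t : ℕ)
    (A B : Finset V) : Prop :=
  ∀ e ∈ E, B ⊆ e → t ≤ (e ∩ A).card

instance {V : Type*} [DecidableEq V] (E : Finset (Finset V)) (t : ℕ) (A B : Finset V) :
    Decidable (TStabs E t A B) :=
  inferInstanceAs (Decidable (∀ e ∈ E, B ⊆ e → t ≤ (e ∩ A).card))

theorem key_step {V : Type*} [DecidableEq V] (E : Finset (Finset V))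
    (d : ℕ) (hd : 2 ≤ d) (hvc : IsTVCDim E 2 d) (S : Finset V) (hS : S ∈ E)
    (hempty : ∀ X ⊆ S, X.card = d + 1 → TRealized E 2 X ∅)
    (X : Finset V) (hXS : X ⊆ S) (hXcard : X.card = d + 1) :
    ∃ A, A ⊆ X ∧ 2 ≤ A.card ∧ A.card ≤ d ∧ TStabs E 2 A (X \ A) := by
  have hns : ¬ TShattered E 2 X := by
    intro h
    have := hvc.2 X h
    omega
  rw [TShattered] at hns
  push_neg at hns
  obtain ⟨X', hX'X, hX'⟩ := hns
  have hcd : (X \ X').card = d + 1 - X'.card := by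
    rw [Finset.card_sdiff_of_subset hX'X, hXcard]
  refine ⟨X \ X', Finset.sdiff_subset, ?_, ?_, ?_⟩
  · by_contra h
    push_neg at h
    exact hX' ⟨X \ X', Finset.sdiff_subset, h, S, hS,
      by rw [Finset.inter_eq_left.mpr hXS, Finset.union_sdiff_of_subset hX'X]⟩
  · have hne : X' ≠ ∅ := by
      intro h
      rw [h] at hX'
      exact hX' (hempty X hXS hXcard)
    have : 1 ≤ X'.card := Finset.card_pos.mpr (Finset.nonempty_iff_ne_empty.mpr hne)
    omega
  · intro e he hBe
    by_contra h
    push_neg at h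
    have hBe' : X' ⊆ e := fun x hx => hBe (by simp [Finset.mem_sdiff, hX'X hx, hx])
    apply hX'
    refine ⟨e ∩ (X \ X'), (Finset.inter_subset_right).trans Finset.sdiff_subset, h, e, he, ?_⟩
    ext x
    simp only [Finset.mem_inter, Finset.mem_union, Finset.mem_sdiff]
    constructor
    · rintro ⟨hx, hxe⟩
      by_cases hx' : x ∈ X'
      · exact Or.inl hx'
      · exact Or.inr ⟨hxe, hx, hx'⟩
    · rintro (hx | ⟨hxe, hx, -⟩)
      · exact ⟨hX'X hx, hBe' hx⟩
      · exact ⟨hx, hxe⟩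

theorem two_stabbing_lemma {V : Type*} [Fintype V] [DecidableEq V] (E : Finset (Finset V))
    (d : ℕ) (hd : 2 ≤ d) (hvc : IsTVCDim E 2 d) (S : Finset V) (hS : S ∈ E)
    (hcard : d + 1 ≤ S.card)
    (hempty : ∀ X ⊆ S, X.card = d + 1 → TRealized E 2 X ∅) :
    ∃ i ∈ Finset.Icc 2 d, ∃ A ⊆ S, A.card = i ∧
      (S.card.choose (d + 1) : ℝ) / (((d : ℝ) - 1) * (S.card.choose i : ℝ)) ≤
        ((((S \ A).powersetCard (d + 1 - i)).filter (fun B => TStabs E 2 A B)).card : ℝ) := by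
  classical
  have key : ∀ X : Finset V, ∃ A, X ∈ S.powersetCard (d+1) →
      A ⊆ X ∧ 2 ≤ A.card ∧ A.card ≤ d ∧ TStabs E 2 A (X \ A) := by
    intro X
    by_cases hX : X ∈ S.powersetCard (d+1)
    · rw [Finset.mem_powersetCard] at hX
      obtain ⟨A, hA⟩ := key_step E d hd hvc S hS hempty X hX.1 hX.2
      exact ⟨A, fun _ => hA⟩
    · exact ⟨∅, fun h => absurd h hX⟩
  choose f hf using key
  by_contra hcon
  push_neg at hcon
  set T := S.powersetCard (d+1) with hT
  set 𝒜 := (Finset.Icc 2 d).biUnion (fun i => S.powersetCard i) with h𝒜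
  have hmem : ∀ X ∈ T, f X ∈ 𝒜 := by
    intro X hX
    obtain ⟨h1, h2, h3, h4⟩ := hf X hX
    rw [h𝒜, Finset.mem_biUnion]
    exact ⟨(f X).card, Finset.mem_Icc.mpr ⟨h2, h3⟩, Finset.mem_powersetCard.mpr
      ⟨h1.trans (Finset.mem_powersetCard.mp hX).1, rfl⟩⟩
  have hcount := Finset.card_eq_sum_card_fiberwise hmem
  have hAprops : ∀ A ∈ 𝒜, A ⊆ S ∧ 2 ≤ A.card ∧ A.card ≤ d := by
    intro A hA
    rw [h𝒜, Finset.mem_biUnion] at hA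
    obtain ⟨i, hi, hAi⟩ := hA
    rw [Finset.mem_powersetCard] at hAi
    rw [Finset.mem_Icc] at hi
    exact ⟨hAi.1, by omega, by omega⟩
  have hfib : ∀ A ∈ 𝒜, (T.filter (fun X => f X = A)).card ≤
      (((S \ A).powersetCard (d + 1 - A.card)).filter (fun B => TStabs E 2 A B)).card := by
    intro A hA
    apply Finset.card_le_card_of_injOn (fun X => X \ A)
    · intro X hX
      rw [Finset.mem_coe, Finset.mem_filter] at hX
      obtain ⟨hXT, hfX⟩ := hX
      obtain ⟨h1, h2', h3, h4⟩ := hf X hXT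
      rw [hfX] at h1 h4
      obtain ⟨hXS, hXc⟩ := Finset.mem_powersetCard.mp hXT
      rw [Finset.mem_coe, Finset.mem_filter, Finset.mem_powersetCard]
      exact ⟨⟨Finset.sdiff_subset_sdiff hXS (le_refl A),
        by rw [Finset.card_sdiff_of_subset h1, hXc]⟩, h4⟩
    · intro X1 hX1 X2 hX2 heq
      simp only [Finset.mem_coe, Finset.mem_filter] at hX1 hX2
      have hA1 : A ⊆ X1 := by
        have := (hf X1 hX1.1).1; rwa [hX1.2] at this
      have hA2 : A ⊆ X2 := by
        have := (hf X2 hX2.1).1; rwa [hX2.2] at this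
      have heq' : X1 \ A = X2 \ A := heq
      rw [← Finset.union_sdiff_of_subset hA1, ← Finset.union_sdiff_of_subset hA2, heq']
  set c : ℝ := (S.card.choose (d+1) : ℝ) with hc
  have hlt : ∀ A ∈ 𝒜, ((T.filter (fun X => f X = A)).card : ℝ) <
      c / (((d:ℝ)-1) * (S.card.choose A.card : ℝ)) := by
    intro A hA
    obtain ⟨hAS, h2A, hAd⟩ := hAprops A hA
    have hb := hcon A.card (Finset.mem_Icc.mpr ⟨h2A, hAd⟩) A hAS rfl
    exact lt_of_le_of_lt (by exact_mod_cast hfib A hA) hb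
  have h𝒜ne : 𝒜.Nonempty := by
    obtain ⟨A2, hA2⟩ := Finset.powersetCard_nonempty.mpr (show 2 ≤ S.card by omega)
    exact ⟨A2, Finset.mem_biUnion.mpr ⟨2, Finset.mem_Icc.mpr ⟨le_refl 2, hd⟩, hA2⟩⟩
  have hdisj : (↑(Finset.Icc 2 d) : Set ℕ).PairwiseDisjoint
      (fun i => S.powersetCard i) := by
    intro i _ j _ hij
    simp only [Function.onFun, Finset.disjoint_left]
    intro A hAi hAj
    rw [Finset.mem_powersetCard] at hAi hAj
    exact hij (hAi.2 ▸ hAj.2)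
  have hcpos : (0:ℝ) < c := by
    rw [hc]
    exact_mod_cast Nat.choose_pos hcard
  have hdpos : (0:ℝ) < (d:ℝ) - 1 := by
    have : (2:ℝ) ≤ (d:ℝ) := by exact_mod_cast hd
    linarith
  have hfinal : c < c := by
    calc c = (T.card : ℝ) := by rw [hT, Finset.card_powersetCard]
      _ = ∑ A ∈ 𝒜, ((T.filter (fun X => f X = A)).card : ℝ) := by
          rw [hcount]; push_cast; ring
      _ < ∑ A ∈ 𝒜, c / (((d:ℝ)-1) * (S.card.choose A.card : ℝ)) :=
          Finset.sum_lt_sum_of_nonempty h𝒜ne hlt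
      _ = ∑ i ∈ Finset.Icc 2 d, ∑ A ∈ S.powersetCard i,
            c / (((d:ℝ)-1) * (S.card.choose A.card : ℝ)) :=
          Finset.sum_biUnion hdisj
      _ = ∑ i ∈ Finset.Icc 2 d, c / ((d:ℝ)-1) := by
          apply Finset.sum_congr rfl
          intro i hi
          rw [Finset.mem_Icc] at hi
          have hch : (0:ℝ) < (S.card.choose i : ℝ) := by
            exact_mod_cast Nat.choose_pos (by omega : i ≤ S.card)
          rw [Finset.sum_congr rfl (fun A hA => by
            rw [(Finset.mem_powersetCard.mp hA).2]), Finset.sum_const,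
            Finset.card_powersetCard, nsmul_eq_mul]
          field_simp
      _ = c := by
          rw [Finset.sum_const, Nat.card_Icc, nsmul_eq_mul]
          have : ((d + 1 - 2 : ℕ) : ℝ) = (d:ℝ) - 1 := by
            have h1 : d + 1 - 2 = d - 1 := by omega
            rw [h1, Nat.cast_sub (by omega : 1 ≤ d)]
            push_cast; ring
          rw [this]
          field_simp
  exact absurd hfinal (lt_irrefl c)
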